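/- Let Γ = ⟨A,R⟩ be finite, σ a semantics assigning to each framework a set of extensions, a ∈ A, and ρ: A → [0,1]. Then PROB(a, σ, Γ) = Σ_{E ∈ Ext_σ(Γ), a∈E} ρ(E) equals the weighted model count, with weights ρ on positive literals and 1−ρ on negative literals, of the theory φ_σ ∧ a, where φ_σ is the disjunction over extensions E of the conjunction of members of E and negations of non-members. -/
import Mathlib


open Finset

/-- weight of a set of arguments under independent labelling ρ -/
noncomputable def wt {α : Type*} [Fintype α] [DecidableEq α] (ρ : α → ℝ) (S : Finset α) : ℝ :=
  (∏ b ∈ S, ρ b) * ∏ b ∈ Sᶜ, (1 - ρ b)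

open Classical in
/-- PROB(a, σ, Γ): sum of ρ(E) over σ-extensions E containing a -/
noncomputable def PROB {α : Type*} [Fintype α] [DecidableEq α]
    (ext : Finset (Finset α)) (ρ : α → ℝ) (a : α) : ℝ :=
  ∑ E ∈ ext.filter (fun E => a ∈ E), wt ρ E

/-- weight of a total truth assignment: ρ(x) for positive literals, 1 − ρ(x) for negative -/
noncomputable def wmodel {α : Type*} [Fintype α] (ρ : α → ℝ) (v : α → Bool) : ℝ :=
  ∏ x : α, if v x then ρ x else 1 - ρ x

/-- satisfaction by `v` of φ_σ = ⋁_{E ∈ ext} (⋀_{b∈E} b ∧ ⋀_{b∉E} ¬b) -/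
def satPhi {α : Type*} (ext : Finset (Finset α)) (v : α → Bool) : Prop :=
  ∃ E ∈ ext, (∀ b ∈ E, v b = true) ∧ (∀ b ∉ E, v b = false)

open Classical in
/-- weighted model count of the theory φ_σ ∧ a -/
noncomputable def WMC {α : Type*} [Fintype α]
    (ext : Finset (Finset α)) (ρ : α → ℝ) (a : α) : ℝ :=
  ∑ v ∈ Finset.univ.filter (fun v : α → Bool => satPhi ext v ∧ v a = true), wmodel ρ v

theorem stmt_18 {α : Type*} [Fintype α] [DecidableEq α]
    (ext : Finset (Finset α)) (ρ : α → ℝ) (a : α) :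
    PROB ext ρ a = WMC ext ρ a := by
  classical
  unfold PROB WMC
  refine Finset.sum_nbij' (fun E => fun x => decide (x ∈ E))
    (fun v => Finset.univ.filter (fun x => v x = true)) ?_ ?_ ?_ ?_ ?_
  · intro E hE
    simp only [Finset.mem_filter] at hE ⊢
    exact ⟨by simp, ⟨E, hE.1, by simp, by simp⟩, by simp [hE.2]⟩
  · intro v hv
    simp only [Finset.mem_filter] at hv ⊢
    obtain ⟨_, ⟨E, hE, h1, h2⟩, ha⟩ := hv
    have heq : Finset.univ.filter (fun x => v x = true) = E := by
      ext x; simp only [Finset.mem_filter, Finset.mem_univ, true_and]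
      constructor
      · intro hx; by_contra hxE; exact absurd hx (by simp [h2 x hxE])
      · exact h1 x
    have haE : a ∈ E := by by_contra h; simp [h2 a h] at ha
    exact ⟨heq ▸ hE, Finset.mem_univ a, ha⟩
  · intro E hE
    ext x; simp
  · intro v hv
    funext x
    simp only [Finset.mem_filter, Finset.mem_univ, true_and]
    cases h : v x <;> simp [h]
  · intro E hE
    unfold wt wmodel
    rw [← Finset.prod_mul_prod_compl E (fun x => if decide (x ∈ E) = true then ρ x else 1 - ρ x)]
    congr 1
    · exact Finset.prod_congr rfl (fun x hx => by simp [hx])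
    · exact Finset.prod_congr rfl (fun x hx => by simp [Finset.mem_compl.mp hx])
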